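/- Let S ⊂ ℝ^d be a finite set such that ‖p_1 − p_2‖ / ‖q_1 − q_2‖ ≤ K for all p_1, p_2 ∈ S and all distinct q_1, q_2 ∈ S. If S is (p, j, α)-flat for some p ∈ S, then S is (q, j, 20(Kα)^{1/2})-flat for every q ∈ S. -/

import Mathlib

open scoped BigOperators RealInnerProductSpace
open Filter

noncomputable section

abbrev Pt (d : ℕ) := EuclideanSpace ℝ (Fin d)

def Separated {d : ℕ} (S : Finset (Pt d)) : Prop :=
  ∀ p ∈ S, ∀ q ∈ S, p ≠ q → 1 ≤ dist p q

def IsKDistSet {d : ℕ} (k : ℕ) (S : Finset (Pt d)) : Prop :=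
  ∃ D : Finset ℝ, D.card ≤ k ∧ ∀ p ∈ S, ∀ q ∈ S, p ≠ q → dist p q ∈ D

def mDist (k d : ℕ) : ℕ :=
  sSup {n : ℕ | ∃ S : Finset (Pt d), S.card = n ∧ IsKDistSet k S}

def IsNearlyKDist {d : ℕ} (k : ℕ) (ε : ℝ) (S : Finset (Pt d)) : Prop :=
  Separated S ∧ ∃ t : ℕ → ℝ, (∀ i < k, 1 ≤ t i) ∧
    ∀ p ∈ S, ∀ q ∈ S, p ≠ q → ∃ i < k, dist p q ∈ Set.Icc (t i) (t i + ε)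

def Mnear (k d : ℕ) : ℕ :=
  sSup {M : ℕ | ∀ ε : ℝ, 0 < ε → ∃ S : Finset (Pt d), S.card = M ∧ IsNearlyKDist k ε S}

def vsAngle {d : ℕ} (v : Pt d) (Λ : Submodule ℝ (Pt d)) : ℝ :=
  sInf {θ : ℝ | ∃ w ∈ Λ, w ≠ 0 ∧ θ = InnerProductGeometry.angle v w}

def IsFlatAt {d : ℕ} (S : Finset (Pt d)) (p : Pt d) (j : ℕ) (α : ℝ) : Prop :=
  ∃ Λ : Submodule ℝ (Pt d), Module.finrank ℝ Λ = j ∧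
    ∀ q ∈ S, q ≠ p → vsAngle (p - q) Λ ≤ α

def Nflat (k d' d : ℕ) : ℕ :=
  sSup {N : ℕ | ∀ ε α : ℝ, 0 < ε → 0 < α →
    ∃ S : Finset (Pt d'), S.card = N ∧ IsNearlyKDist k ε S ∧ ∀ p ∈ S, IsFlatAt S p d α}

def turanNum (n s : ℕ) : ℕ :=
  n.choose 2 - ((n % s) * (n / s + 1).choose 2 + (s - n % s) * (n / s).choose 2)

open Classical in
def nearPairs {d : ℕ} (S : Finset (Pt d)) (k : ℕ) (ε : ℝ) (t : ℕ → ℝ) :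
    Finset (Pt d × Pt d) :=
  S.offDiag.filter (fun pq => ∃ i < k, dist pq.1 pq.2 ∈ Set.Icc (t i) (t i + ε))

def Mkdn (k d n : ℕ) : ℕ :=
  sSup {M : ℕ | ∃ (S : Finset (Pt d)) (t : ℕ → ℝ), S.card = n ∧ Separated S ∧
    (∀ i < k, 1 ≤ t i) ∧ (nearPairs S k 1 t).card = 2 * M}



namespace Stmt13Aux

open InnerProductGeometry Real

variable {d : ℕ}

lemma norm_sub_proj_le_mul (Λ : Submodule ℝ (Pt d)) (v w : Pt d) (hwΛ : w ∈ Λ)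
    (hw0 : w ≠ 0) :
    ‖v - (Λ.orthogonalProjectionOnto v : Pt d)‖ ≤ angle v w * ‖v‖ := by
  by_cases hv : v = 0
  · simp [hv, mul_nonneg (angle_nonneg (0:Pt d) w) (norm_nonneg (0:Pt d))]
  have hvn : (0:ℝ) < ‖v‖ := norm_pos_iff.mpr hv
  have hwn : (0:ℝ) < ‖w‖ := norm_pos_iff.mpr hw0
  set c : ℝ := ⟪v, w⟫ / (‖w‖ ^ 2) with hc
  have hmin : ‖v - (Λ.orthogonalProjectionOnto v : Pt d)‖ ≤ ‖v - c • w‖ := by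
    have hmem : c • w ∈ Λ := Λ.smul_mem _ hwΛ
    have horth : ⟪v - (Λ.orthogonalProjectionOnto v : Pt d),
        (Λ.orthogonalProjectionOnto v : Pt d) - c • w⟫ = 0 :=
      Submodule.starProjection_inner_eq_zero v _
        (Submodule.sub_mem _ (Λ.orthogonalProjectionOnto v).2 hmem)
    have heq : v - c • w = (v - (Λ.orthogonalProjectionOnto v : Pt d)) +
        ((Λ.orthogonalProjectionOnto v : Pt d) - c • w) := by abel
    have hsq := norm_add_sq_real (v - (Λ.orthogonalProjectionOnto v : Pt d))
        ((Λ.orthogonalProjectionOnto v : Pt d) - c • w)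
    rw [← heq, horth] at hsq
    nlinarith [norm_nonneg (v - c • w), norm_nonneg (v - (Λ.orthogonalProjectionOnto v : Pt d)),
      sq_nonneg (‖(Λ.orthogonalProjectionOnto v : Pt d) - c • w‖)]
  have hcs : ‖v - c • w‖ ^ 2 = ‖v‖ ^ 2 - ⟪v, w⟫ ^ 2 / ‖w‖ ^ 2 := by
    have h1 := norm_sub_sq_real v (c • w)
    rw [real_inner_smul_right, norm_smul, Real.norm_eq_abs] at h1
    rw [h1, hc]
    rw [mul_pow, sq_abs]
    field_simp
    ring
  have hsin : Real.sin (angle v w) * ‖v‖ = ‖v - c • w‖ := by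
    have h2 := sin_angle_mul_norm_mul_norm v w
    have h3 : (0:ℝ) ≤ ⟪v, v⟫ * ⟪w, w⟫ - ⟪v, w⟫ * ⟪v, w⟫ :=
      sub_nonneg.mpr (real_inner_mul_inner_self_le v w)
    have h4 : (Real.sin (angle v w) * (‖v‖ * ‖w‖)) ^ 2 =
        ⟪v, v⟫ * ⟪w, w⟫ - ⟪v, w⟫ * ⟪v, w⟫ := by
      rw [h2, Real.sq_sqrt h3]
    have h5 : ⟪v, v⟫ = ‖v‖ ^ 2 := real_inner_self_eq_norm_sq v
    have h6 : ⟪w, w⟫ = ‖w‖ ^ 2 := real_inner_self_eq_norm_sq w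
    have hsn : (0:ℝ) ≤ Real.sin (angle v w) := by
      unfold angle
      rw [Real.sin_arccos]
      exact Real.sqrt_nonneg _
    have h7 : (Real.sin (angle v w) * ‖v‖) ^ 2 = ‖v - c • w‖ ^ 2 := by
      rw [hcs]
      have hw2 : (0:ℝ) < ‖w‖ ^ 2 := by positivity
      have h9 : (Real.sin (angle v w) * ‖v‖) ^ 2 * ‖w‖ ^ 2 = ‖v‖ ^ 2 * ‖w‖ ^ 2 - ⟪v, w⟫ ^ 2 := by
        have h10 : (Real.sin (angle v w) * ‖v‖) ^ 2 * ‖w‖ ^ 2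
            = (Real.sin (angle v w) * (‖v‖ * ‖w‖)) ^ 2 := by ring
        rw [h10, h4, h5, h6]; ring
      have h11 : ⟪v, w⟫ ^ 2 / ‖w‖ ^ 2 = ‖v‖ ^ 2 - (Real.sin (angle v w) * ‖v‖) ^ 2 := by
        rw [div_eq_iff (ne_of_gt hw2)]; linarith [h9]
      linarith [h11]
    have h8 : (0:ℝ) ≤ Real.sin (angle v w) * ‖v‖ := mul_nonneg hsn hvn.le
    nlinarith [norm_nonneg (v - c • w)]
  calc ‖v - (Λ.orthogonalProjectionOnto v : Pt d)‖ ≤ ‖v - c • w‖ := hmin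
    _ = Real.sin (angle v w) * ‖v‖ := hsin.symm
    _ ≤ angle v w * ‖v‖ :=
        mul_le_mul_of_nonneg_right (Real.sin_le (angle_nonneg v w)) hvn.le

lemma proj_err (Λ : Submodule ℝ (Pt d)) (v : Pt d) {α : ℝ} (hα : 0 ≤ α)
    {w₀ : Pt d} (hw₀Λ : w₀ ∈ Λ) (hw₀ : w₀ ≠ 0) (h : vsAngle v Λ ≤ α) :
    ‖v - (Λ.orthogonalProjectionOnto v : Pt d)‖ ≤ α * ‖v‖ := by
  by_cases hv : v = 0
  · simp [hv, mul_nonneg hα (norm_nonneg (0:Pt d))]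
  have hvn : (0:ℝ) < ‖v‖ := norm_pos_iff.mpr hv
  have hTne : {θ : ℝ | ∃ w ∈ Λ, w ≠ 0 ∧ θ = angle v w}.Nonempty :=
    ⟨angle v w₀, w₀, hw₀Λ, hw₀, rfl⟩
  have hlb : ‖v - (Λ.orthogonalProjectionOnto v : Pt d)‖ / ‖v‖ ≤ vsAngle v Λ := by
    unfold vsAngle
    apply le_csInf hTne
    rintro θ ⟨w, hwΛ, hw0, rfl⟩
    rw [div_le_iff₀ hvn]
    exact norm_sub_proj_le_mul Λ v w hwΛ hw0
  have := hlb.trans h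
  rw [div_le_iff₀ hvn] at this
  exact this

end Stmt13Aux

set_option maxHeartbeats 1000000 in
theorem stmt13 (d : ℕ) (S : Finset (Pt d)) (K α : ℝ) (hK : 0 < K) (hα : 0 ≤ α)
    (hratio : ∀ p₁ ∈ S, ∀ p₂ ∈ S, ∀ q₁ ∈ S, ∀ q₂ ∈ S,
      q₁ ≠ q₂ → dist p₁ p₂ ≤ K * dist q₁ q₂)
    (j : ℕ) (p : Pt d) (hp : p ∈ S) (hflat : IsFlatAt S p j α) :
    ∀ q ∈ S, IsFlatAt S q j (20 * Real.sqrt (K * α)) := by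
  classical
  intro q hq
  obtain ⟨Λ, hΛrank, hΛ⟩ := hflat
  set t := 20 * Real.sqrt (K * α) with ht
  have hKα : (0:ℝ) ≤ K * α := mul_nonneg hK.le hα
  have ht0 : (0:ℝ) ≤ t := by positivity
  clear_value t
  by_cases hW : ∃ w ∈ Λ, w ≠ (0 : Pt d)
  swap
  · refine ⟨Λ, hΛrank, fun r _ _ => ?_⟩
    have hemp : {θ : ℝ | ∃ w ∈ Λ, w ≠ 0 ∧ θ = InnerProductGeometry.angle (q - r) w} = ∅ := by
      push_neg at hW
      ext θ
      simp only [Set.mem_setOf_eq, Set.mem_empty_iff_false, iff_false, not_exists]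
      rintro w ⟨hwΛ, hw0, _⟩
      exact hw0 (hW w hwΛ)
    unfold vsAngle
    rw [hemp, Real.sInf_empty]
    exact ht0
  obtain ⟨w₀, hw₀Λ, hw₀⟩ := hW
  have hbdd : ∀ v : Pt d,
      BddBelow {θ : ℝ | ∃ w ∈ Λ, w ≠ 0 ∧ θ = InnerProductGeometry.angle v w} := by
    intro v
    refine ⟨0, ?_⟩
    rintro θ ⟨w, _, _, rfl⟩
    exact InnerProductGeometry.angle_nonneg v w
  refine ⟨Λ, hΛrank, fun r hr hrq => ?_⟩
  by_cases hpi : Real.pi ≤ t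
  · refine le_trans (csInf_le_of_le (hbdd _) ⟨w₀, hw₀Λ, hw₀, rfl⟩ ?_) hpi
    exact InnerProductGeometry.angle_le_pi _ _
  push_neg at hpi
  have hsqlt : Real.sqrt (K * α) < Real.pi / 20 := by
    rw [ht] at hpi; linarith
  have hsq2 : Real.sqrt (K * α) ^ 2 = K * α := Real.sq_sqrt hKα
  have hsqnn : (0:ℝ) ≤ Real.sqrt (K * α) := Real.sqrt_nonneg _
  have hpilt : Real.pi < 3.15 := Real.pi_lt_d2
  have hpigt : (3:ℝ) < Real.pi := Real.pi_gt_three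
  have hKαlt : K * α < 1 / 40 := by nlinarith
  set v := q - r with hv
  have hvne : v ≠ 0 := sub_ne_zero.mpr hrq.symm
  have hvn : (0:ℝ) < ‖v‖ := norm_pos_iff.mpr hvne
  clear_value v
  have hpr : ∀ s ∈ S, ‖(p - s) - (Λ.orthogonalProjectionOnto (p - s) : Pt d)‖ ≤ α * ‖p - s‖ := by
    intro s hs
    by_cases hsp : s = p
    · simp [hsp, mul_nonneg hα (norm_nonneg (0:Pt d))]
    · exact Stmt13Aux.proj_err Λ _ hα hw₀Λ hw₀ (hΛ s hs hsp)
  have h1 := hpr r hr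
  have h2 := hpr q hq
  have hd1 : ‖p - r‖ ≤ K * ‖v‖ := by
    have := hratio p hp r hr q hq r hr hrq.symm
    simpa [dist_eq_norm, hv] using this
  have hd2 : ‖p - q‖ ≤ K * ‖v‖ := by
    have := hratio p hp q hq q hq r hr hrq.symm
    simpa [dist_eq_norm, hv] using this
  have hdec : v - (Λ.orthogonalProjectionOnto v : Pt d) =
      ((p - r) - (Λ.orthogonalProjectionOnto (p - r) : Pt d)) -
        ((p - q) - (Λ.orthogonalProjectionOnto (p - q) : Pt d)) := by
    have hvpq : v = (p - r) - (p - q) := by rw [hv]; abel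
    rw [hvpq, map_sub]
    push_cast
    abel
  have herr : ‖v - (Λ.orthogonalProjectionOnto v : Pt d)‖ ≤ 2 * K * α * ‖v‖ := by
    rw [hdec]
    calc ‖((p - r) - (Λ.orthogonalProjectionOnto (p - r) : Pt d)) -
          ((p - q) - (Λ.orthogonalProjectionOnto (p - q) : Pt d))‖
        ≤ ‖(p - r) - (Λ.orthogonalProjectionOnto (p - r) : Pt d)‖ +
          ‖(p - q) - (Λ.orthogonalProjectionOnto (p - q) : Pt d)‖ := norm_sub_le _ _
      _ ≤ α * ‖p - r‖ + α * ‖p - q‖ := add_le_add h1 h2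
      _ ≤ 2 * K * α * ‖v‖ := by nlinarith
  set u : Pt d := (Λ.orthogonalProjectionOnto v : Pt d) with hu
  set e : Pt d := v - u with he
  have hinner : ⟪e, u⟫ = 0 :=
    Submodule.starProjection_inner_eq_zero v _ (Λ.orthogonalProjectionOnto v).2
  have hvue : v = u + e := by rw [he]; abel
  have huΛ : u ∈ Λ := (Λ.orthogonalProjectionOnto v).2
  clear_value u e
  have hcomm : ⟪u, e⟫ = (0:ℝ) := by rw [real_inner_comm]; exact hinner
  have hpyth : ‖v‖ ^ 2 = ‖u‖ ^ 2 + ‖e‖ ^ 2 := by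
    have := norm_add_sq_real u e
    rw [← hvue, hcomm] at this
    linarith
  have hen : ‖e‖ ≤ 2 * K * α * ‖v‖ := herr
  have hen2 : ‖e‖ ≤ ‖v‖ / 2 := by
    have h0 : (0:ℝ) ≤ 1 / 20 - 2 * K * α := by nlinarith
    nlinarith [mul_nonneg h0 hvn.le]
  have hun : (0:ℝ) < ‖u‖ := by
    rcases (norm_nonneg u).lt_or_eq with h | h
    · exact h
    · exfalso
      have hu0 : ‖u‖ = 0 := h.symm
      have he2 : ‖e‖ ^ 2 ≤ ‖v‖ ^ 2 / 4 := by
        nlinarith [norm_nonneg e, hvn.le, mul_le_mul hen2 hen2 (norm_nonneg e) (by positivity : (0:ℝ) ≤ ‖v‖ / 2)]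
      rw [hu0] at hpyth
      nlinarith [hvn, sq_nonneg ‖v‖]
  have hune : u ≠ 0 := norm_pos_iff.mp hun
  have hvu : ⟪v, u⟫ = ‖u‖ ^ 2 := by
    rw [hvue, inner_add_left, real_inner_self_eq_norm_sq, hinner, add_zero]
  have hangle : InnerProductGeometry.angle v u = Real.arcsin (‖e‖ / ‖v‖) := by
    unfold InnerProductGeometry.angle
    have hratio' : ⟪v, u⟫ / (‖v‖ * ‖u‖) = ‖u‖ / ‖v‖ := by
      rw [hvu]; field_simp
    rw [hratio', Real.arccos_eq_arcsin (by positivity)]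
    congr 1
    rw [div_pow]
    have : (1:ℝ) - ‖u‖ ^ 2 / ‖v‖ ^ 2 = (‖e‖ / ‖v‖) ^ 2 := by
      rw [div_pow]
      field_simp
      linarith
    rw [this, Real.sqrt_sq (by positivity)]
  have hs_le : ‖e‖ / ‖v‖ ≤ 2 * K * α := by
    rw [div_le_iff₀ hvn]; linarith
  have hs_nn : (0:ℝ) ≤ ‖e‖ / ‖v‖ := by positivity
  have hfinal : InnerProductGeometry.angle v u ≤ t := by
    rw [hangle]
    by_cases hpi2 : Real.pi / 2 ≤ t
    · exact (Real.arcsin_le_pi_div_two _).trans hpi2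
    push_neg at hpi2
    have hsin : 2 / Real.pi * t ≤ Real.sin t := Real.mul_le_sin ht0 hpi2.le
    have hsle : ‖e‖ / ‖v‖ ≤ Real.sin t := by
      have h2pi : (0:ℝ) < 2 / Real.pi := by positivity
      have ht' : 2 / Real.pi * t = 40 * Real.sqrt (K * α) / Real.pi := by
        rw [ht]; field_simp; ring
      have hstep : 2 * K * α ≤ 40 * Real.sqrt (K * α) / Real.pi := by
        rw [le_div_iff₀ (by linarith : (0:ℝ) < Real.pi)]
        nlinarith
      linarith [hs_le, hstep, ht' ▸ hsin]
    calc Real.arcsin (‖e‖ / ‖v‖) ≤ Real.arcsin (Real.sin t) := Real.monotone_arcsin hsle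
      _ = t := Real.arcsin_sin (by linarith) hpi2.le
  exact le_trans (csInf_le (hbdd v) ⟨u, huΛ, hune, rfl⟩) hfinal


end
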